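/- Let d ≥ 0, let I be a nonempty finite set, and suppose P : F_2^I → ℝ/ℤ has the form P(x) = α + Σ_{S ∈ C(I, ≤d)} λ_S · Π_{i∈S} x(i) mod 1, where α ∈ ℝ/ℤ, the sum is over nonempty subsets S of I with |S| ≤ d, each λ_S is of the form j/2^{d−|S|+1} with j an integer, and x(i) ∈ {0,1} ⊆ ℝ. Then for all h_1, …, h_{d+1}, x ∈ F_2^I, the iterated discrete derivative Δ_{h_1}⋯Δ_{h_{d+1}} P(x) = 0, where Δ_h P(x) = P(x+h) − P(x). -/

import Mathlib

open Finset

variable {I : Type*}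

/-- The discrete derivative of `P : G → ℝ/ℤ` in the direction `h`. -/
noncomputable def discDeriv {G : Type*} [AddCommGroup G] (h : G) (P : G → AddCircle (1 : ℝ)) :
    G → AddCircle (1 : ℝ) := fun x => P (x + h) - P x

/-! ### Auxiliary material -/

/-- The "sign" `(-1)^a` of an element of `F_2`, as a real number. -/
noncomputable def sgn2 (a : ZMod 2) : ℝ := 1 - 2 * (a.val : ℝ)

lemma sgn2_add (a b : ZMod 2) : sgn2 (a + b) = sgn2 a * sgn2 b := by
  have h2 : ((1:ZMod 2) + 1) = 0 := rfl
  have ha := ZMod.val_lt a; have hb := ZMod.val_lt b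
  rw [sgn2, sgn2, sgn2, ZMod.val_add]
  generalize a.val = m at *
  generalize b.val = n at *
  interval_cases m <;> interval_cases n <;> norm_num

lemma sgn2_eq (a : ZMod 2) : sgn2 a = 1 ∨ sgn2 a = -1 := by
  fin_cases a <;> norm_num [sgn2, ZMod.val_zero, ZMod.val_one] <;> norm_num [ZMod.val]

lemma val_eq_sgn2 (a : ZMod 2) : ((a.val : ℝ)) = (1 - sgn2 a) / 2 := by
  simp only [sgn2]; ring

/-- The character of `F_2^I` associated to a subset `T` of `I`, as a real-valued function. -/
noncomputable def chi2 (T : Finset I) (x : I → ZMod 2) : ℝ := ∏ i ∈ T, sgn2 (x i)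

lemma chi2_add (T : Finset I) (x h : I → ZMod 2) :
    chi2 T (x + h) = chi2 T x * chi2 T h := by
  simp only [chi2, Pi.add_apply, sgn2_add, Finset.prod_mul_distrib]

lemma chi2_empty (z : I → ZMod 2) : chi2 (∅ : Finset I) z = 1 := by simp [chi2]

lemma chi2_eq (T : Finset I) (x : I → ZMod 2) : chi2 T x = 1 ∨ chi2 T x = -1 := by
  refine Finset.prod_induction _ (fun a => a = 1 ∨ a = -1) ?_ (Or.inl rfl) ?_
  · rintro a b (rfl | rfl) (rfl | rfl) <;> norm_num
  · intro i _; exact sgn2_eq (x i)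

/-- Expansion of a `{0,1}`-monomial in terms of the characters `chi2`. -/
lemma monomial_expand [DecidableEq I] (S : Finset I) (x : I → ZMod 2) :
    ∏ i ∈ S, ((x i).val : ℝ) =
      ∑ T ∈ S.powerset, (-1) ^ T.card * chi2 T x / 2 ^ S.card := by
  have : ∏ i ∈ S, ((x i).val : ℝ) = ∏ i ∈ S, ((-1) * sgn2 (x i) * (1/2) + 1 / 2) := by
    refine Finset.prod_congr rfl fun i _ => by rw [val_eq_sgn2]; ring
  rw [this, Finset.prod_add]
  refine Finset.sum_congr rfl fun T hT => ?_
  rw [Finset.mem_powerset] at hT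
  rw [Finset.prod_mul_distrib, Finset.prod_mul_distrib, Finset.prod_const,
    Finset.prod_const, Finset.prod_const, Finset.card_sdiff_of_subset hT]
  have hc : T.card + (S.card - T.card) = S.card := Nat.add_sub_cancel' (Finset.card_le_card hT)
  rw [chi2, show ((2:ℝ)) ^ S.card = 2 ^ T.card * 2 ^ (S.card - T.card) from by rw [← pow_add, hc]]
  rw [one_div_pow, one_div_pow]; field_simp

/-- The real-valued discrete derivative. -/
noncomputable def rD {G : Type*} [AddCommGroup G] (h : G) (Q : G → ℝ) : G → ℝ :=
  fun x => Q (x + h) - Q x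

lemma foldr_discDeriv_coe {G : Type*} [AddCommGroup G] (l : List G) (Q : G → ℝ) :
    (List.foldr discDeriv (fun x => ((Q x : ℝ) : AddCircle (1:ℝ))) l) =
      fun x => ((List.foldr rD Q l x : ℝ) : AddCircle (1:ℝ)) := by
  induction l with
  | nil => rfl
  | cons h l ih =>
    funext x
    simp only [List.foldr_cons, ih, discDeriv, rD]
    rw [← QuotientAddGroup.mk_sub]

lemma foldr_rD_sum {G : Type*} [AddCommGroup G] {β : Type*} (l : List G) (s : Finset β)
    (F : β → G → ℝ) :
    List.foldr rD (fun x => ∑ t ∈ s, F t x) l = fun x => ∑ t ∈ s, List.foldr rD (F t) l x := by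
  induction l with
  | nil => rfl
  | cons h l ih =>
    funext x
    simp only [List.foldr_cons, ih, rD, ← Finset.sum_sub_distrib]

lemma foldr_rD_add {G : Type*} [AddCommGroup G] (l : List G) (f g : G → ℝ) :
    List.foldr rD (fun x => f x + g x) l =
      fun x => List.foldr rD f l x + List.foldr rD g l x := by
  induction l with
  | nil => rfl
  | cons h l ih =>
    funext x
    simp only [List.foldr_cons, ih, rD]
    ring

lemma foldr_rD_chi (l : List (I → ZMod 2)) (c : ℝ) (T : Finset I) :
    List.foldr rD (fun x => c * chi2 T x) l =
      fun x => c * chi2 T x * (l.map (fun h => chi2 T h - 1)).prod := by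
  induction l with
  | nil => funext x; simp
  | cons h l ih =>
    funext x
    simp only [List.foldr_cons, ih, rD, List.map_cons, List.prod_cons]
    rw [chi2_add]
    ring

lemma prod_factor_int (T : Finset I) (l : List (I → ZMod 2)) :
    ∃ m : ℤ, (l.map (fun h => chi2 T h - 1)).prod = 2 ^ l.length * (m : ℝ) := by
  induction l with
  | nil => exact ⟨1, by simp⟩
  | cons h l ih =>
    obtain ⟨m, hm⟩ := ih
    rcases chi2_eq T h with he | he
    · exact ⟨0, by simp [he]⟩
    · refine ⟨-m, ?_⟩
      simp only [List.map_cons, List.prod_cons, hm, he, List.length_cons]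
      push_cast
      ring

lemma prod_factor_empty (l : List (I → ZMod 2)) (hl : l ≠ []) :
    (l.map (fun h => chi2 (∅ : Finset I) h - 1)).prod = 0 := by
  cases l with
  | nil => exact absurd rfl hl
  | cons h l => simp [chi2]

lemma sum_int_exists {β : Type*} (s : Finset β) (f : β → ℝ)
    (hf : ∀ t ∈ s, ∃ z : ℤ, f t = (z : ℝ)) : ∃ z : ℤ, ∑ t ∈ s, f t = (z : ℝ) := by
  have hmem : ∑ t ∈ s, f t ∈ AddSubgroup.zmultiples (1:ℝ) := by
    refine AddSubgroup.sum_mem _ fun t ht => ?_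
    obtain ⟨z, hz⟩ := hf t ht
    rw [AddSubgroup.mem_zmultiples_iff]
    exact ⟨z, by simp [hz]⟩
  rw [AddSubgroup.mem_zmultiples_iff] at hmem
  obtain ⟨z, hz⟩ := hmem
  exact ⟨z, by simpa using hz.symm⟩

lemma int_coe_addCircle_zero (z : ℤ) : (((z : ℝ)) : AddCircle (1:ℝ)) = 0 := by
  rw [AddCircle.coe_eq_zero_iff]
  exact ⟨z, by simp⟩

/-- If `P : F_2^I → ℝ/ℤ` has the Tao–Ziegler polynomial form of degree at most `d`, then all
its `(d+1)`-fold discrete derivatives vanish. -/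
theorem stmt10 [Fintype I] [DecidableEq I] [Nonempty I] (d : ℕ)
    (P : (I → ZMod 2) → AddCircle (1 : ℝ))
    (α : AddCircle (1 : ℝ)) (lam : Finset I → ℝ)
    (hlam : ∀ S : Finset I, S.Nonempty → S.card ≤ d →
      ∃ j : ℤ, lam S = (j : ℝ) / 2 ^ (d - S.card + 1))
    (hP : ∀ x, P x = α + ((∑ S ∈ Finset.univ.powerset.filter
        (fun S : Finset I => S.Nonempty ∧ S.card ≤ d),
        lam S * ∏ i ∈ S, ((x i).val : ℝ) : ℝ) : AddCircle (1 : ℝ))) :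
    ∀ (h : Fin (d + 1) → (I → ZMod 2)) (x : I → ZMod 2),
      (List.ofFn h).foldr discDeriv P x = 0 := by
  intro h x
  classical
  set A : Finset (Finset I) := Finset.univ.powerset.filter
      (fun S : Finset I => S.Nonempty ∧ S.card ≤ d) with hA
  obtain ⟨a, ha⟩ : ∃ a : ℝ, ((a : ℝ) : AddCircle (1:ℝ)) = α :=
    QuotientAddGroup.mk_surjective α
  set l : List (I → ZMod 2) := List.ofFn h with hldef
  have hllen : l.length = d + 1 := by simp [hldef]
  have hlne : l ≠ [] := by
    intro hc
    rw [hc] at hllen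
    simp at hllen
  -- rewrite P as a coercion of a real-valued function
  set R : (I → ZMod 2) → ℝ := fun y => a + ∑ S ∈ A, lam S * ∏ i ∈ S, ((y i).val : ℝ) with hR
  have hPR : P = fun y => ((R y : ℝ) : AddCircle (1:ℝ)) := by
    funext y
    rw [hP y, ← ha, hR]
    push_cast
    rw [← QuotientAddGroup.mk_add]
  -- expand R in characters
  have hRchi : R = fun y =>
      (fun z => a * chi2 (∅ : Finset I) z) y +
      (fun z => ∑ p ∈ A.sigma (fun S => S.powerset),
          ((fun p : (_ : Finset I) × Finset I =>
            fun w => ((-1) ^ p.2.card * lam p.1 / 2 ^ p.1.card) * chi2 p.2 w) p) z) y := by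
    funext y
    simp only [hR, chi2_empty, mul_one]
    congr 1
    rw [Finset.sum_sigma]
    refine Finset.sum_congr rfl fun S _ => ?_
    rw [monomial_expand, Finset.mul_sum]
    refine Finset.sum_congr rfl fun T _ => ?_
    ring
  rw [hPR, foldr_discDeriv_coe, hRchi, foldr_rD_add, foldr_rD_sum]
  have hzero : List.foldr rD (fun z => a * chi2 (∅ : Finset I) z) l x = 0 := by
    rw [foldr_rD_chi]
    simp [prod_factor_empty l hlne]
  simp only [hzero, zero_add]
  -- each term in the remaining sum is an integer
  have hterm : ∀ p ∈ A.sigma (fun S => S.powerset), ∃ z : ℤ,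
      List.foldr rD (fun w => ((-1) ^ p.2.card * lam p.1 / 2 ^ p.1.card) * chi2 p.2 w) l x
        = (z : ℝ) := by
    intro p hp
    rw [Finset.mem_sigma] at hp
    obtain ⟨hp1, _⟩ := hp
    rw [hA, Finset.mem_filter] at hp1
    obtain ⟨-, hp1ne, hp1card⟩ := hp1
    obtain ⟨j, hj⟩ := hlam p.1 hp1ne hp1card
    obtain ⟨m, hm⟩ := prod_factor_int p.2 l
    rw [hllen] at hm
    have hpow : (2:ℝ) ^ (d - p.1.card + 1) * 2 ^ p.1.card = 2 ^ (d + 1) := by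
      rw [← pow_add]
      congr 1
      omega
    rw [foldr_rD_chi, hm, hj]
    rcases chi2_eq p.2 x with hc | hc <;> simp only [hc]
    · refine ⟨(-1) ^ p.2.card * j * m, ?_⟩
      push_cast
      rw [mul_comm ((2:ℝ) ^ (d+1))]
      field_simp
      rw [← hpow]
      ring
    · refine ⟨-((-1) ^ p.2.card * j * m), ?_⟩
      push_cast
      rw [mul_comm ((2:ℝ) ^ (d+1))]
      field_simp
      rw [← hpow]
      ring
  obtain ⟨z, hz⟩ := sum_int_exists _ _ hterm
  rw [hz]
  exact int_coe_addCircle_zero z
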